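/- arXiv:1103.5435 — 5 statements merged into one kernel-verified Lean document; each statement's English description precedes it below -/
import Mathlib

section
/- Under the hypotheses of the sequential update scheme (F : ℝ^K → ℝ is C² with |∂²F/∂xᵢ∂xⱼ| ≤ β; updates cycle through a fixed list (ẽ₁, …, ẽ_K̃) of standard basis vectors containing every eᵢ; x^{n+1} − x^n is a multiple of ẽ_{n+1} with ‖x^{n+1} − x^n‖ ≤ γ·|∂ₙF(x^n)|, where ∂ₙF is the partial derivative in direction ẽ_{n+1}), for every n one has ‖dF(x^n)‖₁ ≤ σ · Σ_{j=0}^{K̃−1} |∂_{n+j}F(x^{n+j})|, where σ = 1 + (K−1)·β·γ and ‖dF(x^n)‖₁ = Σ_{i=1}^K |∂F/∂xᵢ(x^n)| is the ℓ¹ norm of the gradient. -/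
lemma step_bound' (K : ℕ) (F : (Fin K → ℝ) → ℝ) (β : ℝ) (hF : ContDiff ℝ 2 F)
    (hbound : ∀ (x : Fin K → ℝ) (i j : Fin K),
      |fderiv ℝ (fun y => fderiv ℝ F y (Pi.single j 1 : Fin K → ℝ)) x
        (Pi.single i 1 : Fin K → ℝ)| ≤ β)
    (y z : Fin K → ℝ) (j : Fin K) (c : ℝ)
    (hzy : z - y = c • (Pi.single j 1 : Fin K → ℝ)) (i : Fin K) :
    |fderiv ℝ F z (Pi.single i 1 : Fin K → ℝ) -
      fderiv ℝ F y (Pi.single i 1 : Fin K → ℝ)| ≤ β * ‖z - y‖ := by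
  set Gi : (Fin K → ℝ) → ℝ := fun w => fderiv ℝ F w (Pi.single i 1) with hGidef
  have hGi : ContDiff ℝ 1 Gi :=
    (hF.fderiv_right (by norm_num)).clm_apply contDiff_const
  have hdiff : Differentiable ℝ Gi := hGi.differentiable one_ne_zero
  have hv : (z - y : Fin K → ℝ) = z - y := rfl
  set g : ℝ → ℝ := fun t => Gi (y + t • (z - y)) with hg
  have hder : ∀ t : ℝ, HasDerivAt g (fderiv ℝ Gi (y + t • (z - y)) (z - y)) t := by
    intro t
    have hline : HasDerivAt (fun t : ℝ => y + t • (z - y)) (z - y) t := by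
      simpa using ((hasDerivAt_id t).smul_const (z - y)).const_add y
    exact (hdiff (y + t • (z - y))).hasFDerivAt.comp_hasDerivAt t hline
  have hnv : ‖z - y‖ = |c| := by
    rw [hzy, norm_smul]
    simp [Pi.norm_single]
  have hbd : ∀ t : ℝ, ‖fderiv ℝ Gi (y + t • (z - y)) (z - y)‖ ≤ β * ‖z - y‖ := by
    intro t
    have : fderiv ℝ Gi (y + t • (z - y)) (z - y) = c * fderiv ℝ Gi (y + t • (z - y)) (Pi.single j 1) := by
      rw [hzy, map_smul, smul_eq_mul]
    rw [this]
    have h2 := hbound (y + t • (z - y)) j i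
    have : ‖c * fderiv ℝ Gi (y + t • (z - y)) (Pi.single j 1)‖ = |c| * |fderiv ℝ Gi (y + t • (z - y)) (Pi.single j 1)| := by
      rw [Real.norm_eq_abs, abs_mul]
    rw [this, hnv]
    calc |c| * |fderiv ℝ Gi (y + t • (z - y)) (Pi.single j 1)| ≤ |c| * β :=
          mul_le_mul_of_nonneg_left h2 (abs_nonneg c)
      _ = β * |c| := mul_comm _ _
    
  have key : ‖g 1 - g 0‖ ≤ (β * ‖z - y‖) * ‖(1 : ℝ) - 0‖ :=
    convex_univ.norm_image_sub_le_of_norm_hasDerivWithin_le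
      (fun t _ => (hder t).hasDerivWithinAt)
      (fun t _ => hbd t) (Set.mem_univ 0) (Set.mem_univ 1)
  have hg1 : g 1 = Gi z := by simp [hg]
  have hg0 : g 0 = Gi y := by simp [hg]
  rw [hg1, hg0] at key
  simpa [Real.norm_eq_abs] using key

/-- Under the sequential update scheme hypotheses (`F` C² with second partials
bounded by `β`, update directions cycling with period `K̃` through a pattern hitting every
coordinate, one-coordinate steps of length at most `γ·|∂ₙF(xⁿ)|`), for every `n` the ℓ¹ norm
of the gradient satisfies
`∑ᵢ |∂F/∂xᵢ(xⁿ)| ≤ (1 + (K−1)·β·γ) · ∑_{j<K̃} |∂_{n+j}F(xⁿ⁺ʲ)|`. -/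
theorem sequential_update_l1_gradient_bound
    (K Ktil : ℕ) (hKtil : 0 < Ktil) (F : (Fin K → ℝ) → ℝ) (β γ : ℝ)
    (hF : ContDiff ℝ 2 F)
    (hbound : ∀ (x : Fin K → ℝ) (i j : Fin K),
      |fderiv ℝ (fun y => fderiv ℝ F y (Pi.single j 1 : Fin K → ℝ)) x
        (Pi.single i 1 : Fin K → ℝ)| ≤ β)
    (e : ℕ → Fin K) (he_per : Function.Periodic e Ktil)
    (he_surj : Function.Surjective e)
    (x : ℕ → Fin K → ℝ)
    (hdir : ∀ n, ∃ c : ℝ, x (n + 1) - x n = c • (Pi.single (e n) 1 : Fin K → ℝ))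
    (hlen : ∀ n, ‖x (n + 1) - x n‖ ≤
      γ * |fderiv ℝ F (x n) (Pi.single (e n) 1 : Fin K → ℝ)|) :
    ∀ n : ℕ,
      ∑ i : Fin K, |fderiv ℝ F (x n) (Pi.single i 1 : Fin K → ℝ)| ≤
        (1 + ((K : ℝ) - 1) * β * γ) *
          ∑ j ∈ Finset.range Ktil,
            |fderiv ℝ F (x (n + j)) (Pi.single (e (n + j)) 1 : Fin K → ℝ)| := by
  intro n
  have hK : 0 < K := (e 0).pos
  have hβ : 0 ≤ β := le_trans (abs_nonneg _) (hbound (x 0) (e 0) (e 0))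
  set D : Fin K → ℕ → ℝ := fun i m => fderiv ℝ F (x m) (Pi.single i 1) with hD
  set S : ℝ := ∑ j ∈ Finset.range Ktil, |D (e (n + j)) (n + j)| with hSdef
  have hS0 : 0 ≤ S := Finset.sum_nonneg fun j _ => abs_nonneg _
  -- per-step derivative-change bound
  have hstep : ∀ m (i : Fin K), |D i (m + 1) - D i m| ≤ β * (γ * |D (e m) m|) := by
    intro m i
    obtain ⟨c, hc⟩ := hdir m
    have h1 := step_bound' K F β hF hbound (x m) (x (m + 1)) (e m) c hc i
    have h2 := hlen m
    calc |D i (m + 1) - D i m| ≤ β * ‖x (m + 1) - x m‖ := h1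
      _ ≤ β * (γ * |D (e m) m|) := mul_le_mul_of_nonneg_left h2 hβ
  -- existence of first hitting index
  have hex : ∀ i : Fin K, ∃ j, j < Ktil ∧ e (n + j) = i := by
    intro i
    obtain ⟨m, hm⟩ := he_surj i
    refine ⟨(m % Ktil + Ktil - n % Ktil) % Ktil, Nat.mod_lt _ hKtil, ?_⟩
    have hmod : ∀ a, e (a % Ktil) = e a := fun a => he_per.map_mod_nat a
    have h1 : (n + (m % Ktil + Ktil - n % Ktil) % Ktil) % Ktil = m % Ktil := by
      rw [Nat.add_mod_mod]
      have ht := Nat.div_add_mod n Ktil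
      have h3 := Nat.mod_lt n hKtil
      have h2 : n + (m % Ktil + Ktil - n % Ktil) = Ktil * (n / Ktil) + Ktil + m % Ktil := by
        generalize Ktil * (n / Ktil) = T at ht ⊢
        omega
      rw [h2]
      have h4 : Ktil * (n / Ktil) + Ktil + m % Ktil = Ktil * (n / Ktil + 1) + m % Ktil := by ring
      rw [h4, Nat.mul_add_mod, Nat.mod_mod_of_dvd m dvd_rfl]
    rw [← hmod (n + _), h1, hmod, hm]
  set k : Fin K → ℕ := fun i => Nat.find (hex i) with hkdef
  have hklt : ∀ i, k i < Ktil := fun i => (Nat.find_spec (hex i)).1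
  have hke : ∀ i, e (n + k i) = i := fun i => (Nat.find_spec (hex i)).2
  have hkinj : Function.Injective k := by
    intro a b hab
    have := hke a
    rw [hab, hke b] at this
    exact this.symm
  have hk0 : k (e n) = 0 := by
    have : 0 < Ktil ∧ e (n + 0) = e n := ⟨hKtil, by simp⟩
    exact Nat.find_eq_zero (hex (e n)) |>.mpr this
  -- telescoping
  have tele : ∀ (i : Fin K) (t : ℕ),
      |D i n| ≤ |D i (n + t)| + ∑ m ∈ Finset.range t, β * (γ * |D (e (n + m)) (n + m)|) := by
    intro i t
    induction t with
    | zero => simp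
    | succ t ih =>
      rw [Finset.sum_range_succ, ← Nat.add_assoc]
      have h2 := hstep (n + t) i
      have h3 : |D i (n + t)| - |D i (n + t + 1)| ≤ |D i (n + t + 1) - D i (n + t)| := by
        have h4 := abs_sub_abs_le_abs_sub (D i (n + t)) (D i (n + t + 1))
        rwa [abs_sub_comm] at h4
      linarith
  -- main per-coordinate bound
  have hper : ∀ i : Fin K,
      |D i n| ≤ |D (e (n + k i)) (n + k i)|
        + ∑ m ∈ Finset.range (k i), β * (γ * |D (e (n + m)) (n + m)|) := by
    intro i
    have h := tele i (k i)
    rw [hke i]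
    exact h
  -- first sum bound via injectivity
  have hfirst : ∑ i : Fin K, |D (e (n + k i)) (n + k i)| ≤ S := by
    have him : ∑ i : Fin K, |D (e (n + k i)) (n + k i)|
        = ∑ j ∈ Finset.univ.image k, |D (e (n + j)) (n + j)| := by
      rw [Finset.sum_image (f := fun j => |D (e (n + j)) (n + j)|)
        (fun a _ b _ hab => hkinj hab)]
    rw [hSdef, him]
    exact Finset.sum_le_sum_of_subset_of_nonneg
      (fun j hj => by
        simp only [Finset.mem_image, Finset.mem_univ] at hj
        obtain ⟨i, _, rfl⟩ := hj
        exact Finset.mem_range.mpr (hklt i))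
      (fun _ _ _ => abs_nonneg _)
  rcases le_or_gt 0 γ with hγ | hγ
  · -- second sum bound
    have hsec : ∀ i : Fin K, i ≠ e n →
        ∑ m ∈ Finset.range (k i), β * (γ * |D (e (n + m)) (n + m)|) ≤ β * γ * S := by
      intro i _
      have h1 : ∑ m ∈ Finset.range (k i), β * (γ * |D (e (n + m)) (n + m)|)
          = β * γ * ∑ m ∈ Finset.range (k i), |D (e (n + m)) (n + m)| := by
        rw [Finset.mul_sum]; ring_nf
      rw [h1]
      refine mul_le_mul_of_nonneg_left ?_ (mul_nonneg hβ hγ)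
      exact Finset.sum_le_sum_of_subset_of_nonneg
        (Finset.range_subset_range.mpr (hklt i).le) (fun _ _ _ => abs_nonneg _)
    have hsum2 : ∑ i : Fin K, ∑ m ∈ Finset.range (k i), β * (γ * |D (e (n + m)) (n + m)|)
        ≤ ((K : ℝ) - 1) * (β * γ * S) := by
      rw [← Finset.sum_erase_add _ _ (Finset.mem_univ (e n)), hk0]
      simp only [Finset.range_zero, Finset.sum_empty, add_zero]
      calc ∑ i ∈ Finset.univ.erase (e n), ∑ m ∈ Finset.range (k i), β * (γ * |D (e (n + m)) (n + m)|)
          ≤ ∑ _i ∈ Finset.univ.erase (e n), β * γ * S :=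
            Finset.sum_le_sum fun i hi => hsec i (Finset.ne_of_mem_erase hi)
        _ = ((Finset.univ.erase (e n)).card : ℝ) * (β * γ * S) := by
            rw [Finset.sum_const, nsmul_eq_mul]
        _ = ((K : ℝ) - 1) * (β * γ * S) := by
            rw [Finset.card_erase_of_mem (Finset.mem_univ _), Finset.card_univ, Fintype.card_fin]
            rw [Nat.cast_sub hK, Nat.cast_one]
    calc ∑ i : Fin K, |D i n|
        ≤ ∑ i : Fin K, (|D (e (n + k i)) (n + k i)|
            + ∑ m ∈ Finset.range (k i), β * (γ * |D (e (n + m)) (n + m)|)) :=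
          Finset.sum_le_sum fun i _ => hper i
      _ = (∑ i : Fin K, |D (e (n + k i)) (n + k i)|)
            + ∑ i : Fin K, ∑ m ∈ Finset.range (k i), β * (γ * |D (e (n + m)) (n + m)|) :=
          Finset.sum_add_distrib
      _ ≤ S + ((K : ℝ) - 1) * (β * γ * S) := add_le_add hfirst hsum2
      _ = (1 + ((K : ℝ) - 1) * β * γ) * S := by ring
  · -- degenerate case γ < 0 : all steps are zero
    have hz : ∀ m, |D (e m) m| = 0 ∧ x (m + 1) = x m := by
      intro m
      have h1 : ‖x (m + 1) - x m‖ ≤ γ * |D (e m) m| := hlen m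
      have h2 : (0:ℝ) ≤ ‖x (m + 1) - x m‖ := norm_nonneg _
      have ha : (0:ℝ) ≤ |D (e m) m| := abs_nonneg _
      have h3 : |D (e m) m| ≤ 0 := by nlinarith
      have h3' : |D (e m) m| = 0 := le_antisymm h3 ha
      have h5 : γ * |D (e m) m| = 0 := by rw [h3', mul_zero]
      have h4 : ‖x (m + 1) - x m‖ = 0 := le_antisymm (h5 ▸ h1) h2
      exact ⟨h3', sub_eq_zero.mp (norm_eq_zero.mp h4)⟩
    have hxc : ∀ j, x (n + j) = x n := by
      intro j
      induction j with
      | zero => rfl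
      | succ j ih => rw [← ih, ← Nat.add_assoc]; exact (hz (n + j)).2
    have hSz : S = 0 := by
      rw [hSdef]
      exact Finset.sum_eq_zero fun j _ => (hz (n + j)).1
    have hLz : ∀ i : Fin K, D i n = 0 := by
      intro i
      have h1 := (hz (n + k i)).1
      rw [hke i] at h1
      have h6 : D i (n + k i) = D i n := by
        show fderiv ℝ F (x (n + k i)) (Pi.single i 1) = fderiv ℝ F (x n) (Pi.single i 1)
        rw [hxc (k i)]
      rw [← h6]; exact abs_eq_zero.mp h1
    have hL : ∑ i : Fin K, |D i n| = 0 :=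
      Finset.sum_eq_zero fun i _ => by rw [hLz i, abs_zero]
    have hR : (1 + ((K : ℝ) - 1) * β * γ) * S = 0 := by rw [hSz, mul_zero]
    exact le_of_eq (hL.trans hR.symm)
end

section
/- Let F : ℝ^K → ℝ be C² with all second partial derivatives bounded in absolute value by β, and let (x^n) be a sequence generated by a sequential coordinate update scheme satisfying F(x^{n+1}) − F(x^n) ≥ μ·|∂ₙF(x^n)|² for a fixed μ > 0 (where ∂ₙF is the partial derivative in the direction updated at step n) and ‖x^{n+1} − x^n‖ ≤ γ·|∂ₙF(x^n)|, the update directions cycling through a list containing every standard basis vector eᵢ with period K̃. If the sequence F(x^n) remains bounded above, then Σ_{n=0}^∞ |∂ₙF(x^n)|² ≤ (1/μ)·(lim_{n→∞} F(x^n) − F(x⁰)) < ∞, hence ∂ₙF(x^n) → 0 and ‖dF(x^n)‖ → 0 as n → ∞. -/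
open Filter Finset

private lemma opnorm_le_sum_abs {K : ℕ} (L : (Fin K → ℝ) →L[ℝ] ℝ) :
    ‖L‖ ≤ ∑ i : Fin K, |L (Pi.single i 1)| := by
  refine L.opNorm_le_bound (Finset.sum_nonneg fun i _ => abs_nonneg _) fun v => ?_
  have hv : v = ∑ i : Fin K, v i • (Pi.single i 1 : Fin K → ℝ) := by
    funext j
    simp [Pi.single_apply, Finset.sum_apply]
  have hLv : L v = ∑ i : Fin K, v i * L (Pi.single i 1) := by
    conv_lhs => rw [hv]
    rw [map_sum]
    simp
  rw [Real.norm_eq_abs, hLv]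
  calc |∑ i : Fin K, v i * L (Pi.single i 1)|
      ≤ ∑ i : Fin K, |v i * L (Pi.single i 1)| := Finset.abs_sum_le_sum_abs _ _
    _ ≤ ∑ i : Fin K, |L (Pi.single i 1)| * ‖v‖ := by
        refine Finset.sum_le_sum fun i _ => ?_
        rw [abs_mul, mul_comm]
        exact mul_le_mul_of_nonneg_left (by simpa using norm_le_pi_norm v i) (abs_nonneg _)
    _ = (∑ i : Fin K, |L (Pi.single i 1)|) * ‖v‖ := by rw [Finset.sum_mul]

/-- Under the sequential update scheme hypotheses, if the values `F(xⁿ)` remain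
bounded above, then they converge to some limit `L`, the squared local gradients are summable
with `∑ₙ |∂ₙF(xⁿ)|² ≤ (1/μ)·(L − F(x⁰))`, and consequently `∂ₙF(xⁿ) → 0` and
`‖dF(xⁿ)‖ → 0` as `n → ∞`. -/
theorem sequential_update_gradient_vanishes
    (K Ktil : ℕ) (hKtil : 0 < Ktil) (F : (Fin K → ℝ) → ℝ) (β μ γ : ℝ)
    (hμ : 0 < μ) (hγ : 0 < γ)
    (hF : ContDiff ℝ 2 F)
    (hbound : ∀ (x : Fin K → ℝ) (i j : Fin K),
      |fderiv ℝ (fun y => fderiv ℝ F y (Pi.single j 1 : Fin K → ℝ)) x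
        (Pi.single i 1 : Fin K → ℝ)| ≤ β)
    (e : ℕ → Fin K) (he_per : Function.Periodic e Ktil)
    (he_surj : Function.Surjective e)
    (x : ℕ → Fin K → ℝ)
    (hdir : ∀ n, ∃ c : ℝ, x (n + 1) - x n = c • (Pi.single (e n) 1 : Fin K → ℝ))
    (hinc : ∀ n, F (x (n + 1)) - F (x n) ≥
      μ * (fderiv ℝ F (x n) (Pi.single (e n) 1 : Fin K → ℝ)) ^ 2)
    (hlen : ∀ n, ‖x (n + 1) - x n‖ ≤
      γ * |fderiv ℝ F (x n) (Pi.single (e n) 1 : Fin K → ℝ)|)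
    (hbdd : BddAbove (Set.range fun n => F (x n))) :
    ∃ L : ℝ,
      Filter.Tendsto (fun n => F (x n)) Filter.atTop (nhds L) ∧
      Summable (fun n =>
        |fderiv ℝ F (x n) (Pi.single (e n) 1 : Fin K → ℝ)| ^ 2) ∧
      (∑' n : ℕ, |fderiv ℝ F (x n) (Pi.single (e n) 1 : Fin K → ℝ)| ^ 2) ≤
        (1 / μ) * (L - F (x 0)) ∧
      Filter.Tendsto
        (fun n => fderiv ℝ F (x n) (Pi.single (e n) 1 : Fin K → ℝ))
        Filter.atTop (nhds 0) ∧
      Filter.Tendsto (fun n => ‖fderiv ℝ F (x n)‖) Filter.atTop (nhds 0) := by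
  have hβ : 0 ≤ β := le_trans (abs_nonneg _) (hbound (x 0) (e 0) (e 0))
  set a : ℕ → ℝ := fun n => |fderiv ℝ F (x n) (Pi.single (e n) 1 : Fin K → ℝ)| with ha_def
  -- monotonicity and convergence
  have hmono : Monotone (fun n => F (x n)) := by
    apply monotone_nat_of_le_succ
    intro n
    have h := hinc n
    nlinarith [sq_nonneg (fderiv ℝ F (x n) (Pi.single (e n) 1 : Fin K → ℝ)), hμ.le]
  set L : ℝ := ⨆ n, F (x n) with hL_def
  have hL : Tendsto (fun n => F (x n)) atTop (nhds L) := tendsto_atTop_ciSup hmono hbdd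
  have hle : ∀ n, F (x n) ≤ L := fun n => le_ciSup hbdd n
  -- partial sums bound
  have hps : ∀ N, μ * ∑ n ∈ Finset.range N, a n ^ 2 ≤ F (x N) - F (x 0) := by
    intro N
    induction N with
    | zero => simp
    | succ N ih =>
      rw [Finset.sum_range_succ, mul_add]
      have h := hinc N
      have h2 : a N ^ 2 = (fderiv ℝ F (x N) (Pi.single (e N) 1 : Fin K → ℝ)) ^ 2 :=
        sq_abs _
      rw [h2]
      linarith
  have hps2 : ∀ N, ∑ n ∈ Finset.range N, a n ^ 2 ≤ (1 / μ) * (L - F (x 0)) := by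
    intro N
    have h1 := hps N
    have h2 := hle N
    rw [div_mul_eq_mul_div, one_mul, le_div_iff₀ hμ]
    nlinarith
  have hsummable : Summable (fun n => a n ^ 2) :=
    summable_of_sum_range_le (fun n => sq_nonneg _) hps2
  have htsum : (∑' n : ℕ, a n ^ 2) ≤ (1 / μ) * (L - F (x 0)) :=
    Summable.tsum_le_of_sum_range_le hsummable hps2
  -- a tends to 0
  have ha0 : Tendsto a atTop (nhds 0) := by
    have h := hsummable.tendsto_atTop_zero.sqrt
    simpa [Real.sqrt_sq_eq_abs, abs_abs, ha_def] using h
  -- differentiability of the partial derivatives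
  have hDdiff : ∀ i : Fin K,
      Differentiable ℝ (fun y => fderiv ℝ F y (Pi.single i 1 : Fin K → ℝ)) := by
    intro i
    have h1 : ContDiff ℝ 1 (fderiv ℝ F) := hF.fderiv_right (by norm_num)
    exact ((ContinuousLinearMap.apply ℝ ℝ
      (Pi.single i 1 : Fin K → ℝ)).differentiable.comp (h1.differentiable one_ne_zero))
  -- step Lipschitz estimate
  have hstep : ∀ (i : Fin K) (n : ℕ),
      |fderiv ℝ F (x (n + 1)) (Pi.single i 1 : Fin K → ℝ)
        - fderiv ℝ F (x n) (Pi.single i 1 : Fin K → ℝ)| ≤ β * (γ * a n) := by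
    intro i n
    obtain ⟨c, hc⟩ := hdir n
    set v : Fin K → ℝ := c • (Pi.single (e n) 1 : Fin K → ℝ) with hv_def
    have hx1 : x (n + 1) = x n + v := by rw [← hc]; abel
    have hnv : ‖v‖ = |c| := by
      rw [hv_def, norm_smul, Pi.norm_single, Real.norm_eq_abs, norm_one, mul_one]
    have hcγ : |c| ≤ γ * a n := by
      have := hlen n
      rw [hc, hnv] at this
      exact this
    have hg : ∀ t ∈ Set.Icc (0:ℝ) 1,
        HasDerivWithinAt (fun t : ℝ => fderiv ℝ F (x n + t • v) (Pi.single i 1 : Fin K → ℝ))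
          (fderiv ℝ (fun y => fderiv ℝ F y (Pi.single i 1 : Fin K → ℝ)) (x n + t • v) v)
          (Set.Icc (0:ℝ) 1) t := by
      intro t _
      have h1 : HasDerivAt (fun t : ℝ => x n + t • v) v t := by
        simpa using ((hasDerivAt_id t).smul_const v).const_add (x n)
      exact ((((hDdiff i) (x n + t • v)).hasFDerivAt.comp_hasDerivAt t h1)).hasDerivWithinAt
    have hbnd : ∀ t ∈ Set.Ico (0:ℝ) 1,
        ‖fderiv ℝ (fun y => fderiv ℝ F y (Pi.single i 1 : Fin K → ℝ)) (x n + t • v) v‖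
          ≤ β * |c| := by
      intro t _
      rw [hv_def, map_smul, smul_eq_mul, Real.norm_eq_abs, abs_mul, mul_comm]
      exact mul_le_mul_of_nonneg_right (hbound _ (e n) i) (abs_nonneg _)
    have hmvt := norm_image_sub_le_of_norm_deriv_le_segment' hg hbnd 1
      (Set.right_mem_Icc.2 zero_le_one)
    simp only [one_smul, zero_smul, add_zero, Real.norm_eq_abs, sub_zero, mul_one] at hmvt
    rw [← hx1] at hmvt
    calc |fderiv ℝ F (x (n + 1)) (Pi.single i 1 : Fin K → ℝ)
        - fderiv ℝ F (x n) (Pi.single i 1 : Fin K → ℝ)| ≤ β * |c| := hmvt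
      _ ≤ β * (γ * a n) := mul_le_mul_of_nonneg_left hcγ hβ
  have ha_nonneg : ∀ n, 0 ≤ a n := fun n => abs_nonneg _
  -- telescoping
  have htel : ∀ (i : Fin K) (n j : ℕ),
      |fderiv ℝ F (x (n + j)) (Pi.single i 1 : Fin K → ℝ)
        - fderiv ℝ F (x n) (Pi.single i 1 : Fin K → ℝ)|
        ≤ β * γ * ∑ m ∈ Finset.range j, a (n + m) := by
    intro i n j
    induction j with
    | zero => simp
    | succ j ih =>
      have h2 := hstep i (n + j)
      have h3 : |fderiv ℝ F (x (n + (j+1))) (Pi.single i 1 : Fin K → ℝ)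
          - fderiv ℝ F (x n) (Pi.single i 1 : Fin K → ℝ)|
          ≤ |fderiv ℝ F (x (n + j + 1)) (Pi.single i 1 : Fin K → ℝ)
              - fderiv ℝ F (x (n + j)) (Pi.single i 1 : Fin K → ℝ)|
            + |fderiv ℝ F (x (n + j)) (Pi.single i 1 : Fin K → ℝ)
              - fderiv ℝ F (x n) (Pi.single i 1 : Fin K → ℝ)| := by
        have : n + (j + 1) = n + j + 1 := by omega
        rw [this]
        exact abs_sub_le _ _ _
      rw [Finset.sum_range_succ]
      calc |fderiv ℝ F (x (n + (j+1))) (Pi.single i 1 : Fin K → ℝ)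
          - fderiv ℝ F (x n) (Pi.single i 1 : Fin K → ℝ)|
          ≤ β * (γ * a (n + j)) + β * γ * ∑ m ∈ Finset.range j, a (n + m) := by
            linarith
        _ = β * γ * (∑ m ∈ Finset.range j, a (n + m) + a (n + j)) := by ring
  -- find coordinate in window
  have hfind : ∀ (n : ℕ) (i : Fin K), ∃ j, j < Ktil ∧ e (n + j) = i := by
    intro n i
    obtain ⟨m, hm⟩ := he_surj i
    have hle' : n ≤ Ktil * n := Nat.le_mul_of_pos_left n hKtil
    set d := m + Ktil * n - n with hd_def
    have hdn : n + d = m + Ktil * n := by omega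
    refine ⟨d % Ktil, Nat.mod_lt _ hKtil, ?_⟩
    have h1 : e (n + d % Ktil) = e ((n + d % Ktil) % Ktil) :=
      (he_per.map_mod_nat _).symm
    rw [h1, Nat.add_mod_mod, hdn, Nat.add_mul_mod_self_left, he_per.map_mod_nat, hm]
  -- window sum
  set b : ℕ → ℝ := fun n => ∑ m ∈ Finset.range Ktil, a (n + m) with hb_def
  have hb0 : Tendsto b atTop (nhds 0) := by
    have h : ∀ m : ℕ, Tendsto (fun n => a (n + m)) atTop (nhds 0) := by
      intro m
      exact ha0.comp (tendsto_add_atTop_nat m)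
    have := tendsto_finset_sum (Finset.range Ktil) (fun m _ => h m)
    simpa using this
  have hb_nonneg : ∀ n, 0 ≤ b n :=
    fun n => Finset.sum_nonneg fun m _ => ha_nonneg _
  -- each partial derivative bound
  have hDbound : ∀ (i : Fin K) (n : ℕ),
      |fderiv ℝ F (x n) (Pi.single i 1 : Fin K → ℝ)| ≤ (1 + β * γ) * b n := by
    intro i n
    obtain ⟨j, hj, hej⟩ := hfind n i
    have h1 := htel i n j
    have h2 : |fderiv ℝ F (x (n + j)) (Pi.single i 1 : Fin K → ℝ)| = a (n + j) := by
      rw [ha_def]; simp [hej]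
    have h3 : a (n + j) ≤ b n := by
      rw [hb_def]
      exact Finset.single_le_sum (fun m _ => ha_nonneg (n + m)) (Finset.mem_range.2 hj)
    have h4 : ∑ m ∈ Finset.range j, a (n + m) ≤ b n := by
      rw [hb_def]
      exact Finset.sum_le_sum_of_subset_of_nonneg
        (Finset.range_subset_range.2 hj.le) (fun m _ _ => ha_nonneg (n + m))
    have h5 : |fderiv ℝ F (x n) (Pi.single i 1 : Fin K → ℝ)|
        ≤ |fderiv ℝ F (x (n + j)) (Pi.single i 1 : Fin K → ℝ)|
          + |fderiv ℝ F (x (n + j)) (Pi.single i 1 : Fin K → ℝ)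
              - fderiv ℝ F (x n) (Pi.single i 1 : Fin K → ℝ)| := by
      have := abs_sub_abs_le_abs_sub (fderiv ℝ F (x n) (Pi.single i 1 : Fin K → ℝ))
        (fderiv ℝ F (x (n + j)) (Pi.single i 1 : Fin K → ℝ))
      have h6 := abs_sub_comm (fderiv ℝ F (x n) (Pi.single i 1 : Fin K → ℝ))
        (fderiv ℝ F (x (n + j)) (Pi.single i 1 : Fin K → ℝ))
      linarith
    have hβγ : 0 ≤ β * γ := mul_nonneg hβ hγ.le
    nlinarith [h1, h2, h3, h4, h5, mul_le_mul_of_nonneg_left h4 hβγ]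
  -- full gradient vanishes
  have hgrad : Tendsto (fun n => ‖fderiv ℝ F (x n)‖) atTop (nhds 0) := by
    have hub : ∀ n, ‖fderiv ℝ F (x n)‖ ≤ (K * (1 + β * γ)) * b n := by
      intro n
      calc ‖fderiv ℝ F (x n)‖
          ≤ ∑ i : Fin K, |fderiv ℝ F (x n) (Pi.single i 1 : Fin K → ℝ)| :=
            opnorm_le_sum_abs _
        _ ≤ ∑ _i : Fin K, (1 + β * γ) * b n :=
            Finset.sum_le_sum fun i _ => hDbound i n
        _ = (K * (1 + β * γ)) * b n := by
            rw [Finset.sum_const, Finset.card_univ, Fintype.card_fin, nsmul_eq_mul]; ring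
    have hg0 : Tendsto (fun n => (K * (1 + β * γ)) * b n) atTop (nhds 0) := by
      have := hb0.const_mul ((K : ℝ) * (1 + β * γ))
      simpa using this
    exact squeeze_zero (fun n => norm_nonneg _) hub hg0
  refine ⟨L, hL, hsummable, htsum, ?_, hgrad⟩
  rw [← tendsto_zero_iff_norm_tendsto_zero] at *
  exact tendsto_zero_iff_norm_tendsto_zero.2 (by simpa [Real.norm_eq_abs] using ha0)
end

section
/- Let B ∈ M_N(ℂ) be skew-Hermitian with an orthonormal basis of eigenvectors v₁, …, v_N and purely imaginary eigenvalues λ₁, …, λ_N (B·v_r = λ_r·v_r), let C ∈ M_N(ℂ) and Δt > 0, and set J = ∫₀^{Δt} e^{τB}·C·e^{−τB} dτ. Then for all r, s: ⟨v_r, J·v_s⟩ = γ(ω_{rs}·Δt)·⟨v_r, C·v_s⟩·Δt, where ω_{rs} = λ_r − λ_s and γ(z) = (e^z − 1)/z for z ≠ 0, γ(0) = 1. -/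
open Matrix
open scoped Matrix.Norms.L2Operator

/-- `γ(z) = (e^z − 1)/z` for `z ≠ 0`, `γ(0) = 1`. -/
noncomputable def gammaFn (z : ℂ) : ℂ := if z = 0 then 1 else (Complex.exp z - 1) / z

/-- Eigenvector of a matrix is an eigenvector of its exponential. -/
lemma exp_mulVec_eig {N : ℕ} (A : Matrix (Fin N) (Fin N) ℂ) (w : Fin N → ℂ) (μ : ℂ)
    (h : A *ᵥ w = μ • w) :
    NormedSpace.exp A *ᵥ w = Complex.exp μ • w := by
  have hpow : ∀ n : ℕ, A ^ n *ᵥ w = μ ^ n • w := by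
    intro n
    induction n with
    | zero => simp
    | succ n ih =>
      rw [pow_succ', ← Matrix.mulVec_mulVec, ih, Matrix.mulVec_smul, h, smul_smul, ← pow_succ]
  let T : Matrix (Fin N) (Fin N) ℂ →ₗ[ℂ] (Fin N → ℂ) :=
    { toFun := fun M => M *ᵥ w
      map_add' := fun M₁ M₂ => Matrix.add_mulVec M₁ M₂ w
      map_smul' := fun c M => Matrix.smul_mulVec c M w }
  let Tc : Matrix (Fin N) (Fin N) ℂ →L[ℂ] (Fin N → ℂ) := LinearMap.toContinuousLinearMap T
  have hT : NormedSpace.exp A *ᵥ w = Tc (NormedSpace.exp A) := rfl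
  rw [hT, NormedSpace.exp_eq_tsum (𝕂 := ℂ),
    Tc.map_tsum (NormedSpace.expSeries_summable' A)]
  have hco : ∀ n : ℕ, Tc ((n.factorial : ℂ)⁻¹ • A ^ n) = ((n.factorial : ℂ)⁻¹ • μ ^ n) • w := by
    intro n
    show ((n.factorial : ℂ)⁻¹ • A ^ n) *ᵥ w = _
    rw [Matrix.smul_mulVec, hpow, smul_smul, smul_eq_mul]
  rw [tsum_congr hco, (NormedSpace.expSeries_summable' μ).tsum_smul_const]
  congr 1
  rw [Complex.exp_eq_exp_ℂ]
  exact (congrFun (NormedSpace.exp_eq_tsum (𝕂 := ℂ)) μ).symm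

/-- if `B` is skew-Hermitian with orthonormal eigenvectors `v r` and purely
imaginary eigenvalues `l r`, then the matrix elements of
`J = ∫₀^{Δt} e^{τB} C e^{−τB} dτ` in this eigenbasis are
`⟨v_r, J v_s⟩ = γ(ω_{rs}Δt)·⟨v_r, C v_s⟩·Δt` where `ω_{rs} = λ_r − λ_s`. -/
theorem gradient_integral_eigenbasis_matrix_elements
    (N : ℕ) (B C : Matrix (Fin N) (Fin N) ℂ)
    (hB : Bᴴ = -B)
    (v : Fin N → Fin N → ℂ) (l : Fin N → ℂ)
    (horth : ∀ r s : Fin N, star (v r) ⬝ᵥ v s = if r = s then 1 else 0)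
    (heig : ∀ r : Fin N, B *ᵥ v r = l r • v r)
    (himag : ∀ r : Fin N, (l r).re = 0)
    (Δt : ℝ) (hΔt : 0 < Δt) :
    ∀ r s : Fin N,
      star (v r) ⬝ᵥ
          ((∫ τ in (0 : ℝ)..Δt,
              NormedSpace.exp (τ • B) * C * NormedSpace.exp ((-τ) • B)) *ᵥ v s) =
        gammaFn ((l r - l s) * Δt) * (star (v r) ⬝ᵥ (C *ᵥ v s)) * Δt := by
  intro r s
  set ω : ℂ := l r - l s with hω
  have hconj : ∀ t : Fin N, (starRingEnd ℂ) (l t) = - l t := by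
    intro t
    have := himag t
    apply Complex.ext <;> simp [this]
  have heigR : ∀ (c : ℝ) (t : Fin N), (c • B) *ᵥ v t = ((c : ℂ) * l t) • v t := by
    intro c t
    rw [Matrix.smul_mulVec, heig, ← algebraMap_smul ℂ c (l t • v t), smul_smul]
    norm_num
  have hexp1 : Continuous fun τ : ℝ => NormedSpace.exp (τ • B) :=
    (show Continuous (NormedSpace.exp : Matrix (Fin N) (Fin N) ℂ → Matrix (Fin N) (Fin N) ℂ) by rw [← continuousOn_univ, ← Metric.eball_top_eq_univ (0 : Matrix (Fin N) (Fin N) ℂ), ← NormedSpace.expSeries_radius_eq_top ℂ (Matrix (Fin N) (Fin N) ℂ)]; exact NormedSpace.continuousOn_exp (𝕂 := ℂ)).comp (continuous_id.smul continuous_const)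
  have hexp2 : Continuous fun τ : ℝ => NormedSpace.exp ((-τ) • B) :=
    (show Continuous (NormedSpace.exp : Matrix (Fin N) (Fin N) ℂ → Matrix (Fin N) (Fin N) ℂ) by rw [← continuousOn_univ, ← Metric.eball_top_eq_univ (0 : Matrix (Fin N) (Fin N) ℂ), ← NormedSpace.expSeries_radius_eq_top ℂ (Matrix (Fin N) (Fin N) ℂ)]; exact NormedSpace.continuousOn_exp (𝕂 := ℂ)).comp (continuous_neg.smul continuous_const)
  have hcont : Continuous
      (fun τ : ℝ => NormedSpace.exp (τ • B) * C * NormedSpace.exp ((-τ) • B)) :=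
    (hexp1.mul continuous_const).mul hexp2
  have hint : IntervalIntegrable
      (fun τ : ℝ => NormedSpace.exp (τ • B) * C * NormedSpace.exp ((-τ) • B))
      MeasureTheory.volume 0 Δt := hcont.intervalIntegrable 0 Δt
  let T : Matrix (Fin N) (Fin N) ℂ →ₗ[ℂ] ℂ :=
    { toFun := fun M => star (v r) ⬝ᵥ (M *ᵥ v s)
      map_add' := fun M₁ M₂ => by simp [Matrix.add_mulVec, dotProduct_add]
      map_smul' := fun c M => by simp [Matrix.smul_mulVec, dotProduct_smul] }
  let Tc : Matrix (Fin N) (Fin N) ℂ →L[ℂ] ℂ := LinearMap.toContinuousLinearMap T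
  have hTc : star (v r) ⬝ᵥ
      ((∫ τ in (0 : ℝ)..Δt,
          NormedSpace.exp (τ • B) * C * NormedSpace.exp ((-τ) • B)) *ᵥ v s) =
      ∫ τ in (0 : ℝ)..Δt,
        Tc (NormedSpace.exp (τ • B) * C * NormedSpace.exp ((-τ) • B)) :=
    (Tc.intervalIntegral_comp_comm hint).symm
  have hpt : ∀ τ : ℝ,
      Tc (NormedSpace.exp (τ • B) * C * NormedSpace.exp ((-τ) • B)) =
        Complex.exp (ω * τ) * (star (v r) ⬝ᵥ (C *ᵥ v s)) := by
    intro τ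
    have hEm : NormedSpace.exp ((-τ) • B) *ᵥ v s = Complex.exp (-(τ : ℂ) * l s) • v s :=
      exp_mulVec_eig _ _ _ (by rw [heigR]; norm_num)
    have hEr : NormedSpace.exp ((-τ) • B) *ᵥ v r = Complex.exp (-(τ : ℂ) * l r) • v r :=
      exp_mulVec_eig _ _ _ (by rw [heigR]; norm_num)
    have hstar : (NormedSpace.exp (τ • B))ᴴ = NormedSpace.exp ((-τ) • B) := by
      have h1 : (NormedSpace.exp (τ • B))ᴴ = star (NormedSpace.exp (τ • B)) := rfl
      rw [h1, NormedSpace.star_exp]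
      congr 1
      show (τ • B)ᴴ = (-τ) • B
      rw [Matrix.conjTranspose_smul, hB]
      simp [neg_smul, smul_neg]
    show star (v r) ⬝ᵥ
        ((NormedSpace.exp (τ • B) * C * NormedSpace.exp ((-τ) • B)) *ᵥ v s) = _
    rw [← Matrix.mulVec_mulVec, ← Matrix.mulVec_mulVec, hEm, Matrix.mulVec_smul,
      Matrix.mulVec_smul, dotProduct_smul]
    have hleft : star (v r) ⬝ᵥ (NormedSpace.exp (τ • B) *ᵥ (C *ᵥ v s)) =
        Complex.exp ((τ : ℂ) * l r) * (star (v r) ⬝ᵥ (C *ᵥ v s)) := by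
      rw [Matrix.dotProduct_mulVec]
      have h2 : star (v r) ᵥ* NormedSpace.exp (τ • B) =
          star ((NormedSpace.exp (τ • B))ᴴ *ᵥ v r) := by
        rw [Matrix.star_mulVec, Matrix.conjTranspose_conjTranspose]
      rw [h2, hstar, hEr, star_smul, smul_dotProduct, smul_eq_mul]
      congr 1
      rw [Complex.star_def, ← Complex.exp_conj, _root_.map_mul, hconj, map_neg, Complex.conj_ofReal]
      ring_nf
    rw [hleft, smul_eq_mul, ← mul_assoc, ← Complex.exp_add]
    have h3 : -(τ : ℂ) * l s + (τ : ℂ) * l r = ω * τ := by rw [hω]; ring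
    rw [h3]
  rw [hTc]
  simp only [hpt]
  rw [intervalIntegral.integral_mul_const]
  by_cases h0 : ω = 0
  · simp only [h0, zero_mul, Complex.exp_zero, intervalIntegral.integral_const, sub_zero,
      gammaFn, eq_self_iff_true, if_true, one_mul, smul_eq_mul, Complex.real_smul, mul_one]
    ring
  · rw [integral_exp_mul_complex h0]
    have hΔt' : (Δt : ℂ) ≠ 0 := Complex.ofReal_ne_zero.mpr hΔt.ne'
    rw [gammaFn, if_neg (mul_ne_zero h0 hΔt')]
    push_cast
    field_simp
    rw [mul_zero, Complex.exp_zero]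
    ring
end

section
/- Let λ_r, λ_q, λ_s ∈ ℂ with λ_q ≠ λ_s, let Δt > 0, and write ω_{ab} = λ_a − λ_b and γ(z) = (e^z − 1)/z for z ≠ 0, γ(0) = 1. Then e^{−λ_r·Δt} · ∫₀^{Δt} ∫₀^{τ} e^{λ_r·τ}·e^{−λ_q·(τ−σ)}·e^{−λ_s·σ} dσ dτ = (Δt·e^{−λ_r·Δt}/ω_{qs})·[γ(ω_{rs}·Δt) − γ(ω_{rq}·Δt)]. -/
lemma integral_cexp_eq_gamma (a : ℂ) (T : ℝ) (hT : (T : ℂ) ≠ 0) :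
    ∫ τ in (0 : ℝ)..T, Complex.exp (a * τ) = (T : ℂ) * gammaFn (a * T) := by
  by_cases ha : a = 0
  · simp [ha, gammaFn]
  · rw [integral_exp_mul_complex ha]
    have haT : a * (T : ℂ) ≠ 0 := mul_ne_zero ha hT
    simp only [gammaFn, if_neg haT]
    field_simp
    simp only [Complex.ofReal_zero, mul_zero, Complex.exp_zero]

set_option maxHeartbeats 1000000 in
/-- for `λ_q ≠ λ_s` and `Δt > 0`, with `ω_{ab} = λ_a − λ_b`,
`e^{−λ_rΔt}·∫₀^{Δt}∫₀^τ e^{λ_rτ}e^{−λ_q(τ−σ)}e^{−λ_sσ} dσ dτ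
  = (Δt·e^{−λ_rΔt}/ω_{qs})·[γ(ω_{rs}Δt) − γ(ω_{rq}Δt)]`. -/
theorem hessian_coefficient_double_integral
    (lr lq ls : ℂ) (hqs : lq ≠ ls) (Δt : ℝ) (hΔt : 0 < Δt) :
    Complex.exp (-lr * Δt) *
        ∫ τ in (0 : ℝ)..Δt, ∫ σ in (0 : ℝ)..τ,
          Complex.exp (lr * τ) * Complex.exp (-lq * (τ - σ)) * Complex.exp (-ls * σ) =
      ((Δt : ℂ) * Complex.exp (-lr * Δt) / (lq - ls)) *
        (gammaFn ((lr - ls) * Δt) - gammaFn ((lr - lq) * Δt)) := by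
  have hqs' : lq - ls ≠ 0 := sub_ne_zero.mpr hqs
  have hinner : ∀ τ : ℝ,
      (∫ σ in (0 : ℝ)..τ,
        Complex.exp (lr * τ) * Complex.exp (-lq * (τ - σ)) * Complex.exp (-ls * σ)) =
      (Complex.exp ((lr - ls) * τ) - Complex.exp ((lr - lq) * τ)) / (lq - ls) := by
    intro τ
    have h1 : (∫ σ in (0 : ℝ)..τ,
        Complex.exp (lr * τ) * Complex.exp (-lq * (τ - σ)) * Complex.exp (-ls * σ)) =
        ∫ σ in (0 : ℝ)..τ, Complex.exp ((lr - lq) * τ) * Complex.exp ((lq - ls) * σ) := by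
      apply intervalIntegral.integral_congr
      intro σ _
      simp only [← Complex.exp_add]
      congr 1
      ring
    rw [h1, intervalIntegral.integral_const_mul, integral_exp_mul_complex hqs']
    simp only [Complex.ofReal_zero, mul_zero, Complex.exp_zero]
    rw [mul_div_assoc' , mul_sub, ← Complex.exp_add, mul_one]
    congr 2
    ring
  have hcongr : (∫ τ in (0 : ℝ)..Δt, ∫ σ in (0 : ℝ)..τ,
      Complex.exp (lr * τ) * Complex.exp (-lq * (τ - σ)) * Complex.exp (-ls * σ)) =
      ∫ τ in (0 : ℝ)..Δt,
        (Complex.exp ((lr - ls) * τ) - Complex.exp ((lr - lq) * τ)) / (lq - ls) := by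
    apply intervalIntegral.integral_congr
    intro τ _
    exact hinner τ
  rw [hcongr]
  have hint : ∀ b : ℂ, IntervalIntegrable (fun τ : ℝ => Complex.exp (b * τ))
      MeasureTheory.volume 0 Δt := by
    intro b
    apply Continuous.intervalIntegrable
    exact Complex.continuous_exp.comp (continuous_const.mul Complex.continuous_ofReal)
  have hsplit : (∫ τ in (0 : ℝ)..Δt,
      (Complex.exp ((lr - ls) * τ) - Complex.exp ((lr - lq) * τ)) / (lq - ls)) =
      ((∫ τ in (0 : ℝ)..Δt, Complex.exp ((lr - ls) * τ)) -
       (∫ τ in (0 : ℝ)..Δt, Complex.exp ((lr - lq) * τ))) / (lq - ls) := by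
    rw [intervalIntegral.integral_div, intervalIntegral.integral_sub (hint _) (hint _)]
  have hΔt' : (Δt : ℂ) ≠ 0 := by
    exact_mod_cast (Complex.ofReal_ne_zero.mpr (ne_of_gt hΔt))
  rw [hsplit, integral_cexp_eq_gamma _ _ hΔt', integral_cexp_eq_gamma _ _ hΔt']
  ring
end

section
/- Let λ₁ ≤ λ₂ ≤ ⋯ ≤ λ_n be real numbers and g ∈ ℝⁿ with g ≠ 0, and define φ(μ) = −(Σ_{k=1}^n g_k²/(λ_k − μ)²)^{−1/2} for μ < λ₁. Then φ is differentiable on (−∞, λ₁) with φ′(μ) = −φ(μ)³·Σ_{k=1}^n g_k²/(λ_k − μ)³ > 0, and φ is convex and strictly increasing on (−∞, min{λ₁, 0}). -/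
private lemma trp_d2 (c a μ : ℝ) (hd : a - μ ≠ 0) :
    HasDerivAt (fun μ : ℝ => c / (a - μ) ^ 2) (2 * (c / (a - μ) ^ 3)) μ := by
  have h0 : HasDerivAt (fun μ : ℝ => a - μ) (-1) μ := by
    simpa using (hasDerivAt_id μ).const_sub a
  have h1 := h0.pow 2
  have h2 := (hasDerivAt_const μ c).div h1 (pow_ne_zero _ hd)
  refine h2.congr_deriv ?_
  simp only [Pi.pow_apply]
  field_simp
  ring

private lemma trp_d3 (c a μ : ℝ) (hd : a - μ ≠ 0) :
    HasDerivAt (fun μ : ℝ => c / (a - μ) ^ 3) (3 * (c / (a - μ) ^ 4)) μ := by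
  have h0 : HasDerivAt (fun μ : ℝ => a - μ) (-1) μ := by
    simpa using (hasDerivAt_id μ).const_sub a
  have h1 := h0.pow 3
  have h2 := (hasDerivAt_const μ c).div h1 (pow_ne_zero _ hd)
  refine h2.congr_deriv ?_
  simp only [Pi.pow_apply]
  field_simp
  ring


private lemma trp_alg1 (T s : ℝ) (hs : s ≠ 0) :
    T * s⁻¹ ^ 3 = -(-(2 * T / (2 * s)) / s ^ 2) := by
  field_simp

private lemma trp_alg2 (T U s : ℝ) (hs : s ≠ 0) :
    3 * U * s⁻¹ ^ 3 - 3 * T ^ 2 * s⁻¹ ^ 5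
      = 3 * U * s⁻¹ ^ 3 + T * ((3:ℕ) * s⁻¹ ^ (3 - 1) * (-(2 * T / (2 * s)) / s ^ 2)) := by
  push_cast; field_simp; ring

private lemma trp_alg3 (T U s : ℝ) (hs : s ≠ 0) :
    3 * U * s⁻¹ ^ 3 - 3 * T ^ 2 * s⁻¹ ^ 5 = 3 * (s ^ 2 * U - T ^ 2) * s⁻¹ ^ 5 := by
  field_simp

/-- for sorted `λ₁ ≤ ⋯ ≤ λ_n` and `g ≠ 0`, the function
`φ(μ) = −(∑ₖ gₖ²/(λₖ − μ)²)^{−1/2}` is differentiable on `(−∞, λ₁)` with derivative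
`φ′(μ) = −φ(μ)³·∑ₖ gₖ²/(λₖ − μ)³ > 0`, and it is convex and strictly increasing on
`(−∞, min{λ₁, 0})`. -/
theorem trust_region_phi_properties
    (n : ℕ) (hn : 0 < n) (l : Fin n → ℝ) (hl : Monotone l)
    (g : Fin n → ℝ) (hg : g ≠ 0) :
    (∀ μ : ℝ, μ < l ⟨0, hn⟩ →
      HasDerivAt (fun μ : ℝ => -(Real.sqrt (∑ k, g k ^ 2 / (l k - μ) ^ 2))⁻¹)
        (-(-(Real.sqrt (∑ k, g k ^ 2 / (l k - μ) ^ 2))⁻¹) ^ 3 *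
          ∑ k, g k ^ 2 / (l k - μ) ^ 3) μ ∧
      0 < -(-(Real.sqrt (∑ k, g k ^ 2 / (l k - μ) ^ 2))⁻¹) ^ 3 *
          ∑ k, g k ^ 2 / (l k - μ) ^ 3) ∧
    ConvexOn ℝ (Set.Iio (min (l ⟨0, hn⟩) 0))
      (fun μ : ℝ => -(Real.sqrt (∑ k, g k ^ 2 / (l k - μ) ^ 2))⁻¹) ∧
    StrictMonoOn (fun μ : ℝ => -(Real.sqrt (∑ k, g k ^ 2 / (l k - μ) ^ 2))⁻¹)
      (Set.Iio (min (l ⟨0, hn⟩) 0)) := by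
  classical
  -- every eigenvalue bounds μ from above
  have hlk : ∀ (μ : ℝ), μ < l ⟨0, hn⟩ → ∀ k : Fin n, μ < l k := by
    intro μ hμ k
    exact lt_of_lt_of_le hμ (hl (by simp [Fin.le_def]))
  obtain ⟨k0, hk0⟩ : ∃ k, g k ≠ 0 := by
    by_contra h
    push_neg at h
    exact hg (funext h)
  -- positivity of the sums
  have hsum_pos : ∀ (μ : ℝ) (m : ℕ), (∀ k, μ < l k) →
      0 < ∑ k, g k ^ 2 / (l k - μ) ^ m := by
    intro μ m hμ
    apply Finset.sum_pos'
    · intro k _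
      have hk : (0:ℝ) < l k - μ := sub_pos.mpr (hμ k)
      positivity
    · refine ⟨k0, Finset.mem_univ _, ?_⟩
      have hk : (0:ℝ) < l k0 - μ := sub_pos.mpr (hμ k0)
      positivity
  -- derivative of S
  have hDS : ∀ (μ : ℝ), (∀ k, μ < l k) →
      HasDerivAt (fun μ : ℝ => ∑ k, g k ^ 2 / (l k - μ) ^ 2)
        (2 * ∑ k, g k ^ 2 / (l k - μ) ^ 3) μ := by
    intro μ hμ
    have h := HasDerivAt.fun_sum (fun k (_ : k ∈ Finset.univ) =>
      trp_d2 (g k ^ 2) (l k) μ (sub_ne_zero.mpr (hμ k).ne'))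
    rwa [← Finset.mul_sum] at h
  -- derivative of T
  have hDT : ∀ (μ : ℝ), (∀ k, μ < l k) →
      HasDerivAt (fun μ : ℝ => ∑ k, g k ^ 2 / (l k - μ) ^ 3)
        (3 * ∑ k, g k ^ 2 / (l k - μ) ^ 4) μ := by
    intro μ hμ
    have h := HasDerivAt.fun_sum (fun k (_ : k ∈ Finset.univ) =>
      trp_d3 (g k ^ 2) (l k) μ (sub_ne_zero.mpr (hμ k).ne'))
    rwa [← Finset.mul_sum] at h
  -- derivative of φ
  have hphi : ∀ (μ : ℝ), (∀ k, μ < l k) →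
      HasDerivAt (fun μ : ℝ => -(Real.sqrt (∑ k, g k ^ 2 / (l k - μ) ^ 2))⁻¹)
        ((∑ k, g k ^ 2 / (l k - μ) ^ 3) *
          ((Real.sqrt (∑ k, g k ^ 2 / (l k - μ) ^ 2))⁻¹) ^ 3) μ := by
    intro μ hμ
    have hS2 := hsum_pos μ 2 hμ
    have hs : (0:ℝ) < Real.sqrt (∑ k, g k ^ 2 / (l k - μ) ^ 2) := Real.sqrt_pos.mpr hS2
    have h1 := (hDS μ hμ).sqrt hS2.ne'
    have h2 := (h1.inv hs.ne').neg
    refine h2.congr_deriv ?_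
    exact (trp_alg1 _ _ hs.ne').symm
  -- second derivative (of the explicit first derivative)
  have hphi2 : ∀ (μ : ℝ), (∀ k, μ < l k) →
      HasDerivAt (fun μ : ℝ => (∑ k, g k ^ 2 / (l k - μ) ^ 3) *
          ((Real.sqrt (∑ k, g k ^ 2 / (l k - μ) ^ 2))⁻¹) ^ 3)
        (3 * (∑ k, g k ^ 2 / (l k - μ) ^ 4) *
            ((Real.sqrt (∑ k, g k ^ 2 / (l k - μ) ^ 2))⁻¹) ^ 3
          - 3 * (∑ k, g k ^ 2 / (l k - μ) ^ 3) ^ 2 *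
            ((Real.sqrt (∑ k, g k ^ 2 / (l k - μ) ^ 2))⁻¹) ^ 5) μ := by
    intro μ hμ
    have hS2 := hsum_pos μ 2 hμ
    have hs : (0:ℝ) < Real.sqrt (∑ k, g k ^ 2 / (l k - μ) ^ 2) := Real.sqrt_pos.mpr hS2
    have h1 := (hDS μ hμ).sqrt hS2.ne'
    have hpow := (h1.inv hs.ne').pow 3
    have hprod := (hDT μ hμ).mul hpow
    refine hprod.congr_deriv ?_
    exact (trp_alg2 _ _ _ hs.ne').symm
  -- nonnegativity of the second derivative (Cauchy–Schwarz)
  have hsecond_nonneg : ∀ (μ : ℝ), (∀ k, μ < l k) →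
      0 ≤ 3 * (∑ k, g k ^ 2 / (l k - μ) ^ 4) *
            ((Real.sqrt (∑ k, g k ^ 2 / (l k - μ) ^ 2))⁻¹) ^ 3
          - 3 * (∑ k, g k ^ 2 / (l k - μ) ^ 3) ^ 2 *
            ((Real.sqrt (∑ k, g k ^ 2 / (l k - μ) ^ 2))⁻¹) ^ 5 := by
    intro μ hμ
    have hS2 := hsum_pos μ 2 hμ
    have hs : (0:ℝ) < Real.sqrt (∑ k, g k ^ 2 / (l k - μ) ^ 2) := Real.sqrt_pos.mpr hS2
    have hCS : (∑ k, g k ^ 2 / (l k - μ) ^ 3) ^ 2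
        ≤ (∑ k, g k ^ 2 / (l k - μ) ^ 2) * (∑ k, g k ^ 2 / (l k - μ) ^ 4) := by
      have h := Finset.sum_mul_sq_le_sq_mul_sq Finset.univ
        (fun k => g k / (l k - μ)) (fun k => g k / (l k - μ) ^ 2)
      have e1 : ∀ k : Fin n, g k / (l k - μ) * (g k / (l k - μ) ^ 2)
          = g k ^ 2 / (l k - μ) ^ 3 := by
        intro k
        have hd : l k - μ ≠ 0 := sub_ne_zero.mpr (hμ k).ne'
        field_simp
      have e2 : ∀ k : Fin n, (g k / (l k - μ)) ^ 2 = g k ^ 2 / (l k - μ) ^ 2 := by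
        intro k; rw [div_pow]
      have e3 : ∀ k : Fin n, (g k / (l k - μ) ^ 2) ^ 2 = g k ^ 2 / (l k - μ) ^ 4 := by
        intro k; rw [div_pow, ← pow_mul]
      simpa only [e1, e2, e3] using h
    have hsS : Real.sqrt (∑ k, g k ^ 2 / (l k - μ) ^ 2) ^ 2
        = ∑ k, g k ^ 2 / (l k - μ) ^ 2 := Real.sq_sqrt hS2.le
    rw [trp_alg3 _ _ _ hs.ne', hsS]
    have h1 : (0:ℝ) ≤ (∑ k, g k ^ 2 / (l k - μ) ^ 2) * (∑ k, g k ^ 2 / (l k - μ) ^ 4)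
        - (∑ k, g k ^ 2 / (l k - μ) ^ 3) ^ 2 := sub_nonneg.mpr hCS
    have h2 : (0:ℝ) ≤ ((Real.sqrt (∑ k, g k ^ 2 / (l k - μ) ^ 2))⁻¹) ^ 5 := by positivity
    exact mul_nonneg (mul_nonneg (by norm_num) h1) h2
  -- membership in the small interval gives the bound everywhere
  have hsub : ∀ x ∈ Set.Iio (min (l ⟨0, hn⟩) 0), ∀ k : Fin n, x < l k := by
    intro x hx
    exact hlk x (lt_of_lt_of_le hx (min_le_left _ _))
  have hcont : ContinuousOn
      (fun μ : ℝ => -(Real.sqrt (∑ k, g k ^ 2 / (l k - μ) ^ 2))⁻¹)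
      (Set.Iio (min (l ⟨0, hn⟩) 0)) := by
    intro x hx
    exact ((hphi x (hsub x hx)).continuousAt).continuousWithinAt
  refine ⟨fun μ hμ0 => ?_, ?_, ?_⟩
  · have hμ := hlk μ hμ0
    constructor
    · have h := hphi μ hμ
      refine h.congr_deriv ?_
      ring
    · have h3 := hsum_pos μ 3 hμ
      have hS2 := hsum_pos μ 2 hμ
      have hs : (0:ℝ) < Real.sqrt (∑ k, g k ^ 2 / (l k - μ) ^ 2) := Real.sqrt_pos.mpr hS2
      have h := mul_pos (pow_pos (inv_pos.mpr hs) 3) h3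
      refine lt_of_lt_of_eq h ?_
      ring
  · -- convexity
    refine convexOn_of_hasDerivWithinAt2_nonneg (convex_Iio _) hcont
      (f' := fun μ : ℝ => (∑ k, g k ^ 2 / (l k - μ) ^ 3) *
        ((Real.sqrt (∑ k, g k ^ 2 / (l k - μ) ^ 2))⁻¹) ^ 3)
      (f'' := fun μ : ℝ => 3 * (∑ k, g k ^ 2 / (l k - μ) ^ 4) *
            ((Real.sqrt (∑ k, g k ^ 2 / (l k - μ) ^ 2))⁻¹) ^ 3
          - 3 * (∑ k, g k ^ 2 / (l k - μ) ^ 3) ^ 2 *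
            ((Real.sqrt (∑ k, g k ^ 2 / (l k - μ) ^ 2))⁻¹) ^ 5) ?_ ?_ ?_
    · intro x hx
      rw [interior_Iio] at hx
      exact (hphi x (hsub x hx)).hasDerivWithinAt
    · intro x hx
      rw [interior_Iio] at hx
      exact (hphi2 x (hsub x hx)).hasDerivWithinAt
    · intro x hx
      rw [interior_Iio] at hx
      exact hsecond_nonneg x (hsub x hx)
  · -- strict monotonicity
    apply strictMonoOn_of_deriv_pos (convex_Iio _) hcont
    intro x hx
    rw [interior_Iio] at hx
    have hμ := hsub x hx
    rw [(hphi x hμ).deriv]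
    exact mul_pos (hsum_pos x 3 hμ)
      (pow_pos (inv_pos.mpr (Real.sqrt_pos.mpr (hsum_pos x 2 hμ))) 3)
end
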